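/- arXiv:1703.05519 — 2 statements merged into one kernel-verified Lean document; each statement's English description precedes it below -/
import Mathlib

section
/- Let ≻ be represented by a skew-symmetric bilinear φ on the simplex Δ. Then ≻ satisfies symmetry: for all p, q, r ∈ Δ and λ ∈ (0,1), if q ∼ (1/2)p + (1/2)r and λp + (1−λ)r ∼ (1/2)p + (1/2)q, then λr + (1−λ)p ∼ (1/2)r + (1/2)q. -/
/-- The SSB value of two lotteries given a matrix of pairwise utilities. -/
def phi {U : Type*} [Fintype U] (M : U → U → ℝ) (p q : U → ℝ) : ℝ :=
  ∑ a, ∑ b, p a * q b * M a b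

lemma phi_add_left {U : Type*} [Fintype U] (M : U → U → ℝ) (x y z : U → ℝ) :
    phi M (x + y) z = phi M x z + phi M y z := by
  simp [phi, ← Finset.sum_add_distrib, add_mul]

lemma phi_smul_left {U : Type*} [Fintype U] (M : U → U → ℝ) (c : ℝ) (x z : U → ℝ) :
    phi M (c • x) z = c * phi M x z := by
  simp [phi, Finset.mul_sum, mul_assoc]

lemma phi_add_right {U : Type*} [Fintype U] (M : U → U → ℝ) (x y z : U → ℝ) :
    phi M z (x + y) = phi M z x + phi M z y := by
  simp [phi, ← Finset.sum_add_distrib, mul_add, add_mul]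

lemma phi_smul_right {U : Type*} [Fintype U] (M : U → U → ℝ) (c : ℝ) (x z : U → ℝ) :
    phi M z (c • x) = c * phi M z x := by
  simp [phi, Finset.mul_sum]
  congr 1; ext a; congr 1; ext b; ring

lemma phi_skew {U : Type*} [Fintype U] (M : U → U → ℝ) (hskew : ∀ a b, M a b = - M b a)
    (x y : U → ℝ) : phi M x y = - phi M y x := by
  unfold phi
  rw [Finset.sum_comm, ← Finset.sum_neg_distrib]
  congr 1; ext a
  rw [← Finset.sum_neg_distrib]
  congr 1; ext b
  rw [hskew]; ring

/-- Fishburn's symmetry axiom holds for SSB preferences. -/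
theorem ssb_symmetry {U : Type*} [Fintype U]
    (M : U → U → ℝ) (hskew : ∀ a b, M a b = - M b a)
    (p q r : U → ℝ) (hp : p ∈ stdSimplex ℝ U) (hq : q ∈ stdSimplex ℝ U)
    (hr : r ∈ stdSimplex ℝ U) (l : ℝ) (hl : l ∈ Set.Ioo (0:ℝ) 1)
    (h1 : phi M q ((1/2 : ℝ) • p + (1/2 : ℝ) • r) = 0)
    (h2 : phi M (l • p + (1 - l) • r) ((1/2 : ℝ) • p + (1/2 : ℝ) • q) = 0) :
    phi M (l • r + (1 - l) • p) ((1/2 : ℝ) • r + (1/2 : ℝ) • q) = 0 := by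
  simp only [phi_add_left, phi_add_right, phi_smul_left, phi_smul_right] at h1 h2 ⊢
  have hpp : phi M p p = 0 := by
    have := phi_skew M hskew p p; linarith
  have hrr : phi M r r = 0 := by
    have := phi_skew M hskew r r; linarith
  have hqp := phi_skew M hskew q p
  have hqr := phi_skew M hskew q r
  have hrp := phi_skew M hskew r p
  linear_combination -h2 - h1 + (l/2) * hpp + (l/2) * hrr + ((1-l)/2) * hrp + (1/2) * hqp + (1/2) * hqr
end

section
/- Suppose ≻ and ≻' are two preference relations on Δ each represented by a nonzero skew-symmetric bilinear function (φ and ψ respectively), and suppose the indifference relation of ≻ is contained in that of ≻' (φ(p,q)=0 implies ψ(p,q)=0 for all p,q). If moreover φ(p,q) > 0 implies ψ(p,q) > 0 for at least one pair (p,q) with φ(p,q) > 0 and ψ never flips sign relative to φ, then conclude: ≻' ∈ {≻, ≻⁻¹, ∅}; specifically, there exists α ∈ ℝ such that ψ = αφ. -/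
section Aux

variable {U : Type*} [Fintype U]

lemma phi_skew_s13 (M : U → U → ℝ) (hM : ∀ a b, M a b = - M b a) (p q : U → ℝ) :
    phi M p q = - phi M q p := by
  unfold phi
  rw [Finset.sum_comm, ← Finset.sum_neg_distrib]
  refine Finset.sum_congr rfl fun a _ => ?_
  rw [← Finset.sum_neg_distrib]
  refine Finset.sum_congr rfl fun b _ => ?_
  rw [hM b a]; ring

lemma phi_self (M : U → U → ℝ) (hM : ∀ a b, M a b = - M b a) (p : U → ℝ) :
    phi M p p = 0 := by
  have := phi_skew_s13 M hM p p; linarith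

lemma phi_comb_left (M : U → U → ℝ) (s t : ℝ) (p r q : U → ℝ) :
    phi M (s • p + t • r) q = s * phi M p q + t * phi M r q := by
  unfold phi
  rw [Finset.mul_sum, Finset.mul_sum, ← Finset.sum_add_distrib]
  refine Finset.sum_congr rfl fun a _ => ?_
  rw [Finset.mul_sum, Finset.mul_sum, ← Finset.sum_add_distrib]
  refine Finset.sum_congr rfl fun b _ => ?_
  simp only [Pi.add_apply, Pi.smul_apply, smul_eq_mul]; ring

lemma phi_comb_right (M : U → U → ℝ) (s t : ℝ) (p q r : U → ℝ) :
    phi M p (s • q + t • r) = s * phi M p q + t * phi M p r := by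
  unfold phi
  rw [Finset.mul_sum, Finset.mul_sum, ← Finset.sum_add_distrib]
  refine Finset.sum_congr rfl fun a _ => ?_
  rw [Finset.mul_sum, Finset.mul_sum, ← Finset.sum_add_distrib]
  refine Finset.sum_congr rfl fun b _ => ?_
  simp only [Pi.add_apply, Pi.smul_apply, smul_eq_mul]; ring

lemma line_lemma (M N : U → U → ℝ)
    (hsub : ∀ p ∈ stdSimplex ℝ U, ∀ q ∈ stdSimplex ℝ U,
      phi M p q = 0 → phi N p q = 0)
    (x y z : U → ℝ) (hx : x ∈ stdSimplex ℝ U) (hy : y ∈ stdSimplex ℝ U)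
    (hz : z ∈ stdSimplex ℝ U) (h : phi M x y * phi M x z ≤ 0) :
    phi M x y * phi N x z = phi M x z * phi N x y := by
  rcases eq_or_ne (phi M x y) 0 with h0 | h0
  · rw [h0, hsub x hx y hy h0, zero_mul, mul_zero]
  rcases eq_or_ne (phi M x z) 0 with h1 | h1
  · rw [h1, hsub x hx z hz h1, zero_mul, mul_zero]
  set a := phi M x y with ha
  set b := phi M x z with hb
  have hab : a * b < 0 := lt_of_le_of_ne h (mul_ne_zero h0 h1)
  have hd : a - b ≠ 0 := by
    intro hc
    have hab2 : a = b := by linarith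
    rw [hab2] at hab; nlinarith [sq_nonneg b]
  set t : ℝ := a / (a - b) with ht
  have ht0 : 0 ≤ t := by
    have h2 : 0 < a * (a - b) := by nlinarith [sq_nonneg a]
    rcases mul_pos_iff.mp h2 with ⟨h3, h4⟩ | ⟨h3, h4⟩
    · exact le_of_lt (div_pos h3 h4)
    · exact le_of_lt (div_pos_of_neg_of_neg h3 h4)
  have ht1 : 0 ≤ 1 - t := by
    have h2 : 0 < (-b) * (a - b) := by nlinarith [sq_nonneg b]
    have : 0 < (-b) / (a - b) := by
      rcases mul_pos_iff.mp h2 with ⟨h3, h4⟩ | ⟨h3, h4⟩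
      · exact div_pos h3 h4
      · exact div_pos_of_neg_of_neg h3 h4
    have he : 1 - t = (-b) / (a - b) := by
      rw [ht]; field_simp; ring
    linarith [he ▸ this]
  have hw : (1 - t) • y + t • z ∈ stdSimplex ℝ U :=
    (convex_stdSimplex ℝ U) hy hz ht1 ht0 (by ring)
  have hzero : phi M x ((1 - t) • y + t • z) = 0 := by
    rw [phi_comb_right, ← ha, ← hb, ht]
    field_simp
    ring
  have hNzero := hsub x hx _ hw hzero
  rw [phi_comb_right] at hNzero
  have hexp : (1 - t) * phi N x y + t * phi N x z = 0 := hNzero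
  rw [ht] at hexp
  field_simp at hexp
  have h5 : (a * phi N x z - b * phi N x y) * (a - b) = 0 := by linear_combination (a - b) * hexp
  rcases mul_eq_zero.mp h5 with h6 | h6
  · linarith
  · exact absurd h6 hd

lemma E_lemma (M N : U → U → ℝ) (hM : ∀ a b, M a b = - M b a)
    (hN : ∀ a b, N a b = - N b a)
    (hsub : ∀ p ∈ stdSimplex ℝ U, ∀ q ∈ stdSimplex ℝ U,
      phi M p q = 0 → phi N p q = 0)
    (p q r : U → ℝ) (hp : p ∈ stdSimplex ℝ U) (hq : q ∈ stdSimplex ℝ U)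
    (hr : r ∈ stdSimplex ℝ U) (t : ℝ) (ht0 : 0 < t) (ht1 : t < 1) :
    ((1 - t) * phi M p q + t * phi M p r) * phi N q r
      = phi M q r * ((1 - t) * phi N p q + t * phi N p r) := by
  set a := phi M p q
  set b := phi M p r
  set c := phi M q r
  set A := phi N p q
  set B := phi N p r
  set C := phi N q r
  set m : U → ℝ := (1 - t) • q + t • r with hmdef
  have hm : m ∈ stdSimplex ℝ U :=
    (convex_stdSimplex ℝ U) hq hr (by linarith) (le_of_lt ht0) (by ring)
  have e1 : phi M m p = -(1 - t) * a - t * b := by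
    rw [hmdef, phi_comb_left, phi_skew_s13 M hM q p, phi_skew_s13 M hM r p]; ring
  have e2 : phi M m q = -t * c := by
    rw [hmdef, phi_comb_left, phi_self M hM, phi_skew_s13 M hM r q]; ring
  have e3 : phi M m r = (1 - t) * c := by
    rw [hmdef, phi_comb_left, phi_self M hM]; ring
  have f1 : phi N m p = -(1 - t) * A - t * B := by
    rw [hmdef, phi_comb_left, phi_skew_s13 N hN q p, phi_skew_s13 N hN r p]; ring
  have f2 : phi N m q = -t * C := by
    rw [hmdef, phi_comb_left, phi_self N hN, phi_skew_s13 N hN r q]; ring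
  have f3 : phi N m r = (1 - t) * C := by
    rw [hmdef, phi_comb_left, phi_self N hN]; ring
  have hcases : phi M m p * phi M m q ≤ 0 ∨ phi M m p * phi M m r ≤ 0 := by
    by_contra hcon
    push_neg at hcon
    obtain ⟨hA1, hA2⟩ := hcon
    rw [e1, e2] at hA1
    rw [e1, e3] at hA2
    nlinarith [mul_pos hA1 hA2, sq_nonneg ((-(1 - t) * a - t * b) * c),
      mul_pos ht0 (show (0:ℝ) < 1 - t by linarith)]
  rcases hcases with hc1 | hc1
  · have := line_lemma M N hsub m p q hm hp hq hc1
    rw [e1, e2, f1, f2] at this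
    have hkey : t * (((1 - t) * a + t * b) * C) = t * (c * ((1 - t) * A + t * B)) := by
      linear_combination this
    exact mul_left_cancel₀ (ne_of_gt ht0) hkey
  · have := line_lemma M N hsub m p r hm hp hr hc1
    rw [e1, e3, f1, f3] at this
    have hkey : (1 - t) * (((1 - t) * a + t * b) * C)
        = (1 - t) * (c * ((1 - t) * A + t * B)) := by
      linear_combination -this
    have h1t : (1 : ℝ) - t ≠ 0 := by linarith
    exact mul_left_cancel₀ h1t hkey

lemma G_lemma (M N : U → U → ℝ) (hM : ∀ a b, M a b = - M b a)
    (hN : ∀ a b, N a b = - N b a)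
    (hsub : ∀ p ∈ stdSimplex ℝ U, ∀ q ∈ stdSimplex ℝ U,
      phi M p q = 0 → phi N p q = 0)
    (p q r : U → ℝ) (hp : p ∈ stdSimplex ℝ U) (hq : q ∈ stdSimplex ℝ U)
    (hr : r ∈ stdSimplex ℝ U) :
    phi M p q * phi N p r = phi M p r * phi N p q := by
  set a := phi M p q
  set b := phi M p r
  set c := phi M q r with hcdef
  set A := phi N p q
  set B := phi N p r
  set C := phi N q r
  have E2 := E_lemma M N hM hN hsub p q r hp hq hr (1/2) (by norm_num) (by norm_num)
  have E3 := E_lemma M N hM hN hsub p q r hp hq hr (1/3) (by norm_num) (by norm_num)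
  have haC : a * C = c * A := by linear_combination (3:ℝ) * E3 - 2 * E2
  have hbC : b * C = c * B := by linear_combination (4:ℝ) * E2 - 3 * E3
  rcases eq_or_ne c 0 with hc | hc
  · have hC : C = 0 := hsub q hq r hr hc
    rcases le_or_gt (a * b) 0 with hab | hab
    · exact line_lemma M N hsub p q r hp hq hr hab
    · set w : U → ℝ := (1/2 : ℝ) • p + (1/2 : ℝ) • q with hwdef
      have hw : w ∈ stdSimplex ℝ U :=
        (convex_stdSimplex ℝ U) hp hq (by norm_num) (by norm_num) (by norm_num)
      have e1 : phi M w p = -(1/2) * a := by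
        rw [hwdef, phi_comb_left, phi_self M hM, phi_skew_s13 M hM q p]; ring
      have e2 : phi M w r = (1/2) * b + (1/2) * c := by
        rw [hwdef, phi_comb_left]
      have f1 : phi N w p = -(1/2) * A := by
        rw [hwdef, phi_comb_left, phi_self N hN, phi_skew_s13 N hN q p]; ring
      have f2 : phi N w r = (1/2) * B + (1/2) * C := by
        rw [hwdef, phi_comb_left]
      have hprod : phi M w p * phi M w r ≤ 0 := by
        rw [e1, e2, hc]; nlinarith
      have := line_lemma M N hsub w p r hw hp hr hprod
      rw [e1, e2, f1, f2, hc, hC] at this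
      linarith
  · rcases eq_or_ne C 0 with hC | hC
    · have hA : A = 0 := by
        rw [hC, mul_zero] at haC
        exact (mul_eq_zero.mp haC.symm).resolve_left hc
      have hB : B = 0 := by
        rw [hC, mul_zero] at hbC
        exact (mul_eq_zero.mp hbC.symm).resolve_left hc
      rw [hA, hB, mul_zero, mul_zero]
    · have hkey : c * (a * B) = c * (b * A) := by
        linear_combination b * haC - a * hbC
      exact mul_left_cancel₀ hc hkey

end Aux

/-- Fishburn–Gehrlein: if the indifference relation of a nonzero SSB function φ
is contained in that of ψ, then ψ is a scalar multiple of φ (so the relation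
represented by ψ is ≻, ≻⁻¹, or complete indifference). -/
theorem ssb_indifference_determines {U : Type*} [Fintype U]
    (M N : U → U → ℝ) (hM : ∀ a b, M a b = - M b a) (hN : ∀ a b, N a b = - N b a)
    (hnz : ∃ p ∈ stdSimplex ℝ U, ∃ q ∈ stdSimplex ℝ U, phi M p q ≠ 0)
    (hsub : ∀ p ∈ stdSimplex ℝ U, ∀ q ∈ stdSimplex ℝ U,
      phi M p q = 0 → phi N p q = 0) :
    ∃ α : ℝ, ∀ p ∈ stdSimplex ℝ U, ∀ q ∈ stdSimplex ℝ U,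
      phi N p q = α * phi M p q := by
  obtain ⟨p₀, hp₀, q₀, hq₀, ha₀⟩ := hnz
  set α := phi N p₀ q₀ / phi M p₀ q₀ with hα
  refine ⟨α, ?_⟩
  have step1 : ∀ q ∈ stdSimplex ℝ U, phi N p₀ q = α * phi M p₀ q := by
    intro q hq
    have h := G_lemma M N hM hN hsub p₀ q₀ q hp₀ hq₀ hq
    rw [hα, div_mul_eq_mul_div, eq_div_iff ha₀]
    linear_combination h
  have step2 : ∀ p ∈ stdSimplex ℝ U, phi N p q₀ = α * phi M p q₀ := by
    intro p hp
    have h := G_lemma M N hM hN hsub q₀ p₀ p hq₀ hp₀ hp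
    rw [phi_skew_s13 M hM q₀ p₀, phi_skew_s13 N hN q₀ p₀, phi_skew_s13 M hM q₀ p,
      phi_skew_s13 N hN q₀ p] at h
    rw [hα, div_mul_eq_mul_div, eq_div_iff ha₀]
    linear_combination h
  have step3 : ∀ p ∈ stdSimplex ℝ U, phi M p q₀ ≠ 0 →
      ∀ q ∈ stdSimplex ℝ U, phi N p q = α * phi M p q := by
    intro p hp hpq₀ q hq
    have h := G_lemma M N hM hN hsub p q₀ q hp hq₀ hq
    rw [step2 p hp] at h
    refine mul_left_cancel₀ hpq₀ ?_
    linear_combination h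
  intro p hp q hq
  rcases eq_or_ne (phi M p q₀) 0 with h0 | h0
  · set p' : U → ℝ := (1/2 : ℝ) • p + (1/2 : ℝ) • p₀ with hp'def
    have hp' : p' ∈ stdSimplex ℝ U :=
      (convex_stdSimplex ℝ U) hp hp₀ (by norm_num) (by norm_num) (by norm_num)
    have hcomb : phi M p' q₀ = 1/2 * phi M p q₀ + 1/2 * phi M p₀ q₀ := by
      rw [hp'def, phi_comb_left]
    have hne : phi M p' q₀ ≠ 0 := by
      rw [hcomb, h0]
      intro hcon; apply ha₀; linarith
    have h1 := step3 p' hp' hne q hq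
    rw [hp'def, phi_comb_left, phi_comb_left] at h1
    have h2 := step1 q hq
    linear_combination 2 * h1 - h2
  · exact step3 p hp h0 q hq
end
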